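/- Let A and B be complex Banach algebras, s a fixed nonzero complex number with |s| < 1, r > 2 a real number, and θ ≥ 0. Suppose f : A³ → B satisfies f(x, 0, a) = f(0, z, a) = f(x, z, 0) = 0 for all x, z, a ∈ A and, for all λ, μ, η ∈ T¹ and all x, y, z, w, a, b ∈ A, ‖2f(λ(x+y)/2, μ(z−w), η(a+b)) + 2f(λ(x−y)/2, μ(z+w), η(a−b)) − λμη(2f(x,z,a) − 2f(x,w,b) + 2f(y,z,b) − 2f(y,w,a))‖ ≤ ‖s · D₁f(x, y, z, w, a, b)‖ + θ(‖x‖^r + ‖y‖^r)(‖z‖^r + ‖w‖^r)(‖a‖^r + ‖b‖^r). Then there exists a unique ℂ-trilinear mapping H : A³ → B such that ‖f(x, z, a) − H(x, z, a)‖ ≤ (2^r θ/(2(2^r − 2))) ‖x‖^r ‖z‖^r ‖a‖^r for all x, z, a ∈ A. If, in addition, f satisfies ‖f(x_{σ(1)}, x_{σ(2)}, x_{σ(3)}) − f(x₁, x₂, x₃)‖ ≤ θ ‖x₁‖^r ‖x₂‖^r ‖x₃‖^r for all x₁, x₂, x₃ ∈ A and every permutation (σ(1), σ(2), σ(3)) of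 (1,2,3), and ‖f(xy, zw, ab) − f(x, z, a)f(y, w, b)‖ ≤ θ(‖x‖^r + ‖y‖^r)(‖z‖^r + ‖w‖^r)(‖a‖^r + ‖b‖^r) for all x, y, z, w, a, b ∈ A, then H is a permuting trihomomorphism. -/

import Mathlib

/-- A mapping `f : X³ → Y` is *tri-additive* if it is additive in each variable. -/
def TriAdditive {X Y : Type*} [AddCommGroup X] [AddCommGroup Y]
    (f : X → X → X → Y) : Prop :=
  (∀ x x' z a : X, f (x + x') z a = f x z a + f x' z a) ∧
  (∀ x z z' a : X, f x (z + z') a = f x z a + f x z' a) ∧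
  (∀ x z a a' : X, f x z (a + a') = f x z a + f x z a')

/-- A mapping `f : X³ → Y` is *ℂ-trilinear* if it is ℂ-linear in each variable. -/
def CTrilinear {X Y : Type*} [AddCommGroup X] [Module ℂ X] [AddCommGroup Y] [Module ℂ Y]
    (f : X → X → X → Y) : Prop :=
  TriAdditive f ∧
  (∀ (c : ℂ) (x z a : X), f (c • x) z a = c • f x z a) ∧
  (∀ (c : ℂ) (x z a : X), f x (c • z) a = c • f x z a) ∧
  (∀ (c : ℂ) (x z a : X), f x z (c • a) = c • f x z a)

/-- `D₁f(x, y, z, w, a, b)`. -/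
def D₁ {X Y : Type*} [AddCommGroup X] [Module ℂ X] [AddCommGroup Y] [Module ℂ Y]
    (f : X → X → X → Y) (x y z w a b : X) : Y :=
  f (x + y) (z - w) (a + b) + f (x - y) (z + w) (a - b)
    - (2 : ℂ) • f x z a + (2 : ℂ) • f x w b - (2 : ℂ) • f y z b + (2 : ℂ) • f y w a

/-- `D₂f(x, y, z, w, a, b)`. -/
noncomputable def D₂ {X Y : Type*} [AddCommGroup X] [Module ℂ X] [AddCommGroup Y] [Module ℂ Y]
    (f : X → X → X → Y) (x y z w a b : X) : Y :=
  (2 : ℂ) • f ((2 : ℂ)⁻¹ • (x + y)) (z - w) (a + b)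
    + (2 : ℂ) • f ((2 : ℂ)⁻¹ • (x - y)) (z + w) (a - b)
    - (2 : ℂ) • f x z a + (2 : ℂ) • f x w b - (2 : ℂ) • f y z b + (2 : ℂ) • f y w a


/-- A ℂ-trilinear `H : A³ → B` is a *permuting trihomomorphism* if it is multiplicative
and is invariant under every permutation of its three variables. -/
def PermutingTrihomomorphism {A B : Type*} [Ring A] [Module ℂ A] [Ring B] [Module ℂ B]
    (H : A → A → A → B) : Prop :=
  CTrilinear H ∧
  (∀ x y z w a b : A, H (x * y) (z * w) (a * b) = H x z a * H y w b) ∧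
  (∀ (σ : Equiv.Perm (Fin 3)) (x : Fin 3 → A),
    H (x (σ 0)) (x (σ 1)) (x (σ 2)) = H (x 0) (x 1) (x 2))


open Filter Topology

section StabHelpers

/-- Master exponent bookkeeping lemma. -/
lemma stab_exp (r : ℝ) (n j k : ℕ) :
    ((2:ℝ)^n)^j * ((((2:ℝ)^n)⁻¹)^r)^k = ((2:ℝ)^((j:ℝ) - r*k))^n := by
  have h2 : (0:ℝ) < 2 := two_pos
  rw [← Real.rpow_natCast (2:ℝ) n, ← Real.rpow_neg h2.le, ← Real.rpow_mul h2.le,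
    ← Real.rpow_natCast ((2:ℝ)^(-(n:ℝ)*r)) k, ← Real.rpow_natCast ((2:ℝ)^((n:ℝ))) j,
    ← Real.rpow_mul h2.le, ← Real.rpow_mul h2.le, ← Real.rpow_add h2,
    ← Real.rpow_natCast ((2:ℝ)^((j:ℝ) - r*k)) n, ← Real.rpow_mul h2.le]
  congr 1
  ring

lemma stab_geom_lim (c : ℝ) (hc : c < 0) (K : ℝ) :
    Tendsto (fun n : ℕ => K * ((2:ℝ)^c)^n) atTop (𝓝 0) := by
  have h1 : (2:ℝ)^c < 1 := Real.rpow_lt_one_of_one_lt_of_neg one_lt_two hc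
  have h0 : (0:ℝ) ≤ (2:ℝ)^c := Real.rpow_nonneg (by norm_num) c
  simpa using (tendsto_pow_atTop_nhds_zero_of_lt_one h0 h1).const_mul K

lemma stab_norm_smul_rpow {X : Type*} [NormedAddCommGroup X] [Module ℂ X] [NormSMulClass ℂ X]
    (r : ℝ) (n : ℕ) (x : X) :
    ‖((2:ℂ)^n)⁻¹ • x‖ ^ r = (((2:ℝ)^n)⁻¹)^r * ‖x‖^r := by
  rw [norm_smul, Real.mul_rpow (by positivity) (norm_nonneg x)]
  congr 2
  simp

lemma stab_jensen {X Y : Type*} [AddCommGroup X] [Module ℂ X] [AddCommGroup Y] [Module ℂ Y]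
    (g : X → Y) (h0 : g 0 = 0)
    (hJ : ∀ p q, g (p + q) + g (p - q) = (2:ℂ) • g p) :
    ∀ u v, g (u + v) = g u + g v := by
  intro u v
  set p := (2:ℂ)⁻¹ • (u + v) with hp
  set q := (2:ℂ)⁻¹ • (u - v) with hq
  have hpq1 : p + q = u := by rw [hp, hq]; module
  have hpq2 : p - q = v := by rw [hp, hq]; module
  have hpp : p + p = u + v := by rw [hp]; module
  have hdouble : g (p + p) = (2:ℂ) • g p := by
    have := hJ p p
    simpa [h0] using this
  have h1 : g u + g v = (2:ℂ) • g p := by rw [← hpq1, ← hpq2]; exact hJ p q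
  rw [← hpp, hdouble, h1]

lemma stab_chomog {X Y : Type*} [AddCommGroup X] [Module ℂ X] [AddCommGroup Y] [Module ℂ Y]
    (g : X → Y) (hadd : ∀ u v, g (u + v) = g u + g v)
    (hcirc : ∀ l : ℂ, ‖l‖ = 1 → ∀ x, g (l • x) = l • g x) :
    ∀ (c : ℂ) (x : X), g (c • x) = c • g x := by
  have h0 : g 0 = 0 := by
    have := hadd 0 0; simpa using this.symm
  have hnat : ∀ (n : ℕ) (x : X), g ((n : ℂ) • x) = (n : ℂ) • g x := by
    intro n
    induction n with
    | zero => intro x; simpa using h0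
    | succ k ih =>
      intro x
      have : ((k+1 : ℕ) : ℂ) • x = (k:ℂ) • x + x := by push_cast; module
      rw [this, hadd, ih]
      push_cast
      module
  have h01 : ∀ t : ℝ, 0 ≤ t → t ≤ 1 → ∀ x, g ((t : ℂ) • x) = (t : ℂ) • g x := by
    intro t ht0 ht1 x
    set l : ℂ := ⟨t, Real.sqrt (1 - t^2)⟩ with hl
    have hsq : 0 ≤ 1 - t^2 := by nlinarith
    have hnl : ‖l‖ = 1 := by
      rw [Complex.norm_def, Complex.normSq_mk, Real.mul_self_sqrt hsq]
      rw [show t * t + (1 - t^2) = 1 by ring, Real.sqrt_one]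
    have hnl' : ‖(starRingEnd ℂ) l‖ = 1 := by rwa [RCLike.norm_conj]
    have hre : l + (starRingEnd ℂ) l = ((2*t : ℝ) : ℂ) := by
      rw [Complex.add_conj]
    have key : (2:ℂ) • g ((t:ℂ) • x) = (2:ℂ) • ((t:ℂ) • g x) := by
      have h1 : g ((t:ℂ) • x) + g ((t:ℂ) • x) = g (((2*t:ℝ):ℂ) • x) := by
        rw [← hadd]; congr 1; push_cast; module
      have h2 : g (((2*t:ℝ):ℂ) • x) = (l + (starRingEnd ℂ) l) • g x := by
        rw [← hre, add_smul, hadd, hcirc l hnl, hcirc _ hnl', add_smul]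
      rw [two_smul, h1, h2, hre]
      push_cast
      module
    have h2ne : (2:ℂ) ≠ 0 := two_ne_zero
    have := congrArg (fun y => (2:ℂ)⁻¹ • y) key
    simpa [smul_smul, inv_mul_cancel₀ h2ne] using this
  have hpos : ∀ t : ℝ, 0 ≤ t → ∀ x, g ((t : ℂ) • x) = (t : ℂ) • g x := by
    intro t ht x
    obtain ⟨n, hn⟩ : ∃ n : ℕ, t ≤ n ∧ 0 < n := ⟨⌈t⌉₊ + 1, by
      constructor
      · exact le_trans (Nat.le_ceil t) (by push_cast; linarith)
      · omega⟩
    obtain ⟨hn1, hn2⟩ := hn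
    have hnne : (n:ℝ) ≠ 0 := by positivity
    have hnc : (n:ℂ) ≠ 0 := Nat.cast_ne_zero.mpr (by omega)
    have harg : (t : ℂ) • x = (n : ℂ) • (((t/n : ℝ) : ℂ) • x) := by
      rw [smul_smul]
      congr 1
      push_cast
      field_simp
    rw [harg, hnat, h01 (t/n) (by positivity) (by rw [div_le_one (by positivity)]; exact hn1),
      smul_smul]
    congr 1
    push_cast
    field_simp
  intro c x
  rcases eq_or_ne c 0 with rfl | hc
  · simpa using h0
  · have hnc : ‖c / (‖c‖ : ℂ)‖ = 1 := by
      rw [norm_div, Complex.norm_real, norm_norm, div_self (norm_ne_zero_iff.mpr hc)]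
    have hcc : ((‖c‖:ℝ) : ℂ) ≠ 0 := by
      exact_mod_cast norm_ne_zero_iff.mpr hc
    have harg : c • x = ((‖c‖ : ℝ) : ℂ) • ((c / (‖c‖:ℂ)) • x) := by
      rw [smul_smul, mul_comm, div_mul_cancel₀ _ hcc]
    rw [harg, hpos _ (norm_nonneg c), hcirc _ hnc, smul_smul,
      mul_comm, div_mul_cancel₀ _ hcc]

/-- The rescaled approximating sequence (in the first variable). -/
noncomputable def stabPhi {X Y : Type*} [AddCommGroup X] [Module ℂ X] [AddCommGroup Y]
    [Module ℂ Y] (f : X → X → X → Y) (n : ℕ) (x z a : X) : Y :=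
  (2:ℂ)^n • f (((2:ℂ)^n)⁻¹ • x) z a

/-- The functional-equation vector. -/
noncomputable def stabVec {X Y : Type*} [AddCommGroup X] [Module ℂ X] [AddCommGroup Y]
    [Module ℂ Y] (g : X → X → X → Y) (l m e : ℂ) (x y z w a b : X) : Y :=
  (2 : ℂ) • g ((2 : ℂ)⁻¹ • (l • (x + y))) (m • (z - w)) (e • (a + b))
    + (2 : ℂ) • g ((2 : ℂ)⁻¹ • (l • (x - y))) (m • (z + w)) (e • (a - b))
    - (l * m * e) • ((2 : ℂ) • g x z a - (2 : ℂ) • g x w b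
        + (2 : ℂ) • g y z b - (2 : ℂ) • g y w a)

lemma stab_vec_scale {X Y : Type*} [AddCommGroup X] [Module ℂ X] [AddCommGroup Y] [Module ℂ Y]
    (f : X → X → X → Y) (n : ℕ) (l m e : ℂ) (x y z w a b : X) :
    (2:ℂ)^n • stabVec f l m e (((2:ℂ)^n)⁻¹ • x) (((2:ℂ)^n)⁻¹ • y) z w a b
      = stabVec (stabPhi f n) l m e x y z w a b := by
  simp only [stabVec, stabPhi]
  have e1 : (2:ℂ)⁻¹ • (l • ((((2:ℂ)^n)⁻¹ • x) + (((2:ℂ)^n)⁻¹ • y)))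
      = ((2:ℂ)^n)⁻¹ • ((2:ℂ)⁻¹ • (l • (x+y))) := by module
  have e2 : (2:ℂ)⁻¹ • (l • ((((2:ℂ)^n)⁻¹ • x) - (((2:ℂ)^n)⁻¹ • y)))
      = ((2:ℂ)^n)⁻¹ • ((2:ℂ)⁻¹ • (l • (x-y))) := by module
  rw [e1, e2]
  module

lemma stab_D1_scale {X Y : Type*} [AddCommGroup X] [Module ℂ X] [AddCommGroup Y] [Module ℂ Y]
    (f : X → X → X → Y) (n : ℕ) (x y z w a b : X) :
    (2:ℂ)^n • D₁ f (((2:ℂ)^n)⁻¹ • x) (((2:ℂ)^n)⁻¹ • y) z w a b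
      = D₁ (stabPhi f n) x y z w a b := by
  simp only [D₁, stabPhi]
  have e1 : (((2:ℂ)^n)⁻¹ • x) + (((2:ℂ)^n)⁻¹ • y) = ((2:ℂ)^n)⁻¹ • (x+y) := by module
  have e2 : (((2:ℂ)^n)⁻¹ • x) - (((2:ℂ)^n)⁻¹ • y) = ((2:ℂ)^n)⁻¹ • (x-y) := by module
  rw [e1, e2]
  module

/-- Two trilinear maps close to each other (with superlinear gauge) are equal. -/
lemma stab_tri_eq {A B : Type*} [NormedRing A] [NormedAlgebra ℂ A]
    [NormedRing B] [NormedAlgebra ℂ B]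
    (r C : ℝ) (hr : 1 < r) (H₁ H₂ : A → A → A → B)
    (h₁ : CTrilinear H₁) (h₂ : CTrilinear H₂)
    (hb : ∀ x z a : A, ‖H₁ x z a - H₂ x z a‖ ≤ C * (‖x‖^r * ‖z‖^r * ‖a‖^r)) :
    H₁ = H₂ := by
  funext x z a
  have key : ∀ n : ℕ, ‖H₁ x z a - H₂ x z a‖
      ≤ (C * (‖x‖^r * ‖z‖^r * ‖a‖^r)) * ((2:ℝ)^((3:ℝ) - r*3))^n := by
    intro n
    have hc : (2:ℂ)^n ≠ 0 := pow_ne_zero _ two_ne_zero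
    have hone : ((2:ℂ)^n * (2:ℂ)^n * (2:ℂ)^n)
        * (((2:ℂ)^n)⁻¹ * (((2:ℂ)^n)⁻¹ * ((2:ℂ)^n)⁻¹)) = 1 := by
      field_simp
    have hs1 : H₁ (((2:ℂ)^n)⁻¹ • x) (((2:ℂ)^n)⁻¹ • z) (((2:ℂ)^n)⁻¹ • a)
        = (((2:ℂ)^n)⁻¹ * (((2:ℂ)^n)⁻¹ * ((2:ℂ)^n)⁻¹)) • H₁ x z a := by
      rw [h₁.2.1, h₁.2.2.1, h₁.2.2.2]
      module
    have hs2 : H₂ (((2:ℂ)^n)⁻¹ • x) (((2:ℂ)^n)⁻¹ • z) (((2:ℂ)^n)⁻¹ • a)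
        = (((2:ℂ)^n)⁻¹ * (((2:ℂ)^n)⁻¹ * ((2:ℂ)^n)⁻¹)) • H₂ x z a := by
      rw [h₂.2.1, h₂.2.2.1, h₂.2.2.2]
      module
    have hdiff : H₁ x z a - H₂ x z a
        = ((2:ℂ)^n * (2:ℂ)^n * (2:ℂ)^n) •
          (H₁ (((2:ℂ)^n)⁻¹ • x) (((2:ℂ)^n)⁻¹ • z) (((2:ℂ)^n)⁻¹ • a)
            - H₂ (((2:ℂ)^n)⁻¹ • x) (((2:ℂ)^n)⁻¹ • z) (((2:ℂ)^n)⁻¹ • a)) := by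
      rw [hs1, hs2, smul_sub, smul_smul, smul_smul, hone, one_smul, one_smul]
    rw [hdiff, norm_smul]
    have hnn : ‖(2:ℂ)^n * (2:ℂ)^n * (2:ℂ)^n‖ = (2:ℝ)^n * (2:ℝ)^n * (2:ℝ)^n := by
      simp [norm_mul]
    rw [hnn]
    have hb' := hb (((2:ℂ)^n)⁻¹ • x) (((2:ℂ)^n)⁻¹ • z) (((2:ℂ)^n)⁻¹ • a)
    rw [stab_norm_smul_rpow r n x, stab_norm_smul_rpow r n z, stab_norm_smul_rpow r n a] at hb'
    have hexp := stab_exp r n 3 3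
    push_cast at hexp
    calc (2:ℝ)^n * (2:ℝ)^n * (2:ℝ)^n * ‖H₁ (((2:ℂ)^n)⁻¹ • x) (((2:ℂ)^n)⁻¹ • z) (((2:ℂ)^n)⁻¹ • a)
            - H₂ (((2:ℂ)^n)⁻¹ • x) (((2:ℂ)^n)⁻¹ • z) (((2:ℂ)^n)⁻¹ • a)‖
        ≤ (2:ℝ)^n * (2:ℝ)^n * (2:ℝ)^n *
          (C * ((((2:ℝ)^n)⁻¹)^r * ‖x‖^r * ((((2:ℝ)^n)⁻¹)^r * ‖z‖^r) * ((((2:ℝ)^n)⁻¹)^r * ‖a‖^r))) := by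
          apply mul_le_mul_of_nonneg_left _ (by positivity)
          calc ‖_ - _‖ ≤ C * ((((2:ℝ)^n)⁻¹)^r * ‖x‖^r * ((((2:ℝ)^n)⁻¹)^r * ‖z‖^r) * ((((2:ℝ)^n)⁻¹)^r * ‖a‖^r)) := hb'
          _ = _ := by ring
      _ = (C * (‖x‖^r * ‖z‖^r * ‖a‖^r)) * (((2:ℝ)^n)^3 * ((((2:ℝ)^n)⁻¹)^r)^3) := by ring
      _ = (C * (‖x‖^r * ‖z‖^r * ‖a‖^r)) * ((2:ℝ)^((3:ℝ) - r*3))^n := by rw [hexp]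
  have hlim := stab_geom_lim ((3:ℝ) - r*3) (by linarith) (C * (‖x‖^r * ‖z‖^r * ‖a‖^r))
  have h0 : ‖H₁ x z a - H₂ x z a‖ ≤ 0 := ge_of_tendsto' hlim key
  have := norm_le_zero_iff.mp h0
  exact sub_eq_zero.mp this

/-- Part 2: any trilinear map uniformly close to `f` (with superlinear gauge) inherits
multiplicativity and permutation invariance. -/
lemma stab_part2 {A B : Type*} [NormedRing A] [NormedAlgebra ℂ A]
    [NormedRing B] [NormedAlgebra ℂ B]
    (r θ C : ℝ) (hr : 2 < r) (hθ : 0 ≤ θ) (hC : 0 ≤ C)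
    (f H : A → A → A → B) (hH : CTrilinear H)
    (hb : ∀ x z a : A, ‖f x z a - H x z a‖ ≤ C * (‖x‖^r * ‖z‖^r * ‖a‖^r))
    (hp : ∀ (σ : Equiv.Perm (Fin 3)) (x : Fin 3 → A),
      ‖f (x (σ 0)) (x (σ 1)) (x (σ 2)) - f (x 0) (x 1) (x 2)‖
        ≤ θ * ‖x 0‖^r * ‖x 1‖^r * ‖x 2‖^r)
    (hm : ∀ x y z w a b : A,
      ‖f (x*y) (z*w) (a*b) - f x z a * f y w b‖
        ≤ θ * (‖x‖^r + ‖y‖^r) * (‖z‖^r + ‖w‖^r) * (‖a‖^r + ‖b‖^r)) :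
    PermutingTrihomomorphism H := by
  classical
  set ψ : ℕ → A → A → A → B := fun n x z a =>
    ((2:ℂ)^n * (2:ℂ)^n * (2:ℂ)^n) •
      f (((2:ℂ)^n)⁻¹ • x) (((2:ℂ)^n)⁻¹ • z) (((2:ℂ)^n)⁻¹ • a) with hψ
  have hkey : ∀ (n : ℕ) (x z a : A), ‖ψ n x z a - H x z a‖
      ≤ (C * (‖x‖^r * ‖z‖^r * ‖a‖^r)) * ((2:ℝ)^((3:ℝ) - r*3))^n := by
    intro n x z a
    have hc : (2:ℂ)^n ≠ 0 := pow_ne_zero _ two_ne_zero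
    have hone : ((2:ℂ)^n * (2:ℂ)^n * (2:ℂ)^n)
        * (((2:ℂ)^n)⁻¹ * (((2:ℂ)^n)⁻¹ * ((2:ℂ)^n)⁻¹)) = 1 := by field_simp
    have hs1 : H (((2:ℂ)^n)⁻¹ • x) (((2:ℂ)^n)⁻¹ • z) (((2:ℂ)^n)⁻¹ • a)
        = (((2:ℂ)^n)⁻¹ * (((2:ℂ)^n)⁻¹ * ((2:ℂ)^n)⁻¹)) • H x z a := by
      rw [hH.2.1, hH.2.2.1, hH.2.2.2]
      module
    have hdiff : ψ n x z a - H x z a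
        = ((2:ℂ)^n * (2:ℂ)^n * (2:ℂ)^n) •
          (f (((2:ℂ)^n)⁻¹ • x) (((2:ℂ)^n)⁻¹ • z) (((2:ℂ)^n)⁻¹ • a)
            - H (((2:ℂ)^n)⁻¹ • x) (((2:ℂ)^n)⁻¹ • z) (((2:ℂ)^n)⁻¹ • a)) := by
      simp only [hψ]
      rw [smul_sub, hs1, smul_smul, hone, one_smul]
    rw [hdiff, norm_smul]
    have hnn : ‖(2:ℂ)^n * (2:ℂ)^n * (2:ℂ)^n‖ = (2:ℝ)^n * (2:ℝ)^n * (2:ℝ)^n := by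
      simp [norm_mul]
    rw [hnn]
    have hb' := hb (((2:ℂ)^n)⁻¹ • x) (((2:ℂ)^n)⁻¹ • z) (((2:ℂ)^n)⁻¹ • a)
    rw [stab_norm_smul_rpow r n x, stab_norm_smul_rpow r n z, stab_norm_smul_rpow r n a] at hb'
    have hexp := stab_exp r n 3 3
    push_cast at hexp
    calc (2:ℝ)^n * (2:ℝ)^n * (2:ℝ)^n * ‖_ - _‖
        ≤ (2:ℝ)^n * (2:ℝ)^n * (2:ℝ)^n *
          (C * ((((2:ℝ)^n)⁻¹)^r * ‖x‖^r * ((((2:ℝ)^n)⁻¹)^r * ‖z‖^r) * ((((2:ℝ)^n)⁻¹)^r * ‖a‖^r))) := by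
          apply mul_le_mul_of_nonneg_left _ (by positivity)
          calc ‖_ - _‖ ≤ C * ((((2:ℝ)^n)⁻¹)^r * ‖x‖^r * ((((2:ℝ)^n)⁻¹)^r * ‖z‖^r) * ((((2:ℝ)^n)⁻¹)^r * ‖a‖^r)) := hb'
          _ = _ := by ring
      _ = (C * (‖x‖^r * ‖z‖^r * ‖a‖^r)) * (((2:ℝ)^n)^3 * ((((2:ℝ)^n)⁻¹)^r)^3) := by ring
      _ = (C * (‖x‖^r * ‖z‖^r * ‖a‖^r)) * ((2:ℝ)^((3:ℝ) - r*3))^n := by rw [hexp]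
  have hpsi : ∀ x z a : A, Tendsto (fun n => ψ n x z a) atTop (𝓝 (H x z a)) := by
    intro x z a
    have h0 : Tendsto (fun n => ψ n x z a - H x z a) atTop (𝓝 0) :=
      squeeze_zero_norm (fun n => hkey n x z a) (stab_geom_lim _ (by linarith) _)
    have := h0.add_const (H x z a)
    simpa using this
  have ht2 : Tendsto (fun n : ℕ => 2*n) atTop atTop :=
    tendsto_atTop_atTop_of_monotone (fun a b h => by omega) (fun b => ⟨b, by omega⟩)
  -- multiplicativity
  have hmul : ∀ x y z w a b : A, H (x*y) (z*w) (a*b) = H x z a * H y w b := by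
    intro x y z w a b
    have h1 : Tendsto (fun n => ψ (2*n) (x*y) (z*w) (a*b)) atTop (𝓝 (H (x*y) (z*w) (a*b))) :=
      (hpsi (x*y) (z*w) (a*b)).comp ht2
    have h2 : Tendsto (fun n => ψ n x z a * ψ n y w b) atTop (𝓝 (H x z a * H y w b)) :=
      (hpsi x z a).mul (hpsi y w b)
    have h3 : ∀ n : ℕ, ‖ψ (2*n) (x*y) (z*w) (a*b) - ψ n x z a * ψ n y w b‖
        ≤ (θ * (‖x‖^r + ‖y‖^r) * (‖z‖^r + ‖w‖^r) * (‖a‖^r + ‖b‖^r)) * ((2:ℝ)^((6:ℝ) - r*3))^n := by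
      intro n
      have hpw : (2:ℂ)^(2*n) = (2:ℂ)^n * (2:ℂ)^n := by rw [two_mul, pow_add]
      have hm' := hm (((2:ℂ)^n)⁻¹ • x) (((2:ℂ)^n)⁻¹ • y) (((2:ℂ)^n)⁻¹ • z)
        (((2:ℂ)^n)⁻¹ • w) (((2:ℂ)^n)⁻¹ • a) (((2:ℂ)^n)⁻¹ • b)
      rw [smul_mul_smul_comm, smul_mul_smul_comm, smul_mul_smul_comm] at hm'
      rw [stab_norm_smul_rpow r n x, stab_norm_smul_rpow r n y, stab_norm_smul_rpow r n z,
        stab_norm_smul_rpow r n w, stab_norm_smul_rpow r n a, stab_norm_smul_rpow r n b] at hm'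
      have heq : ψ (2*n) (x*y) (z*w) (a*b) - ψ n x z a * ψ n y w b
          = ((2:ℂ)^n*(2:ℂ)^n*(2:ℂ)^n*((2:ℂ)^n*(2:ℂ)^n*(2:ℂ)^n)) •
            (f ((((2:ℂ)^n)⁻¹ * ((2:ℂ)^n)⁻¹) • (x*y))
               ((((2:ℂ)^n)⁻¹ * ((2:ℂ)^n)⁻¹) • (z*w))
               ((((2:ℂ)^n)⁻¹ * ((2:ℂ)^n)⁻¹) • (a*b))
             - f (((2:ℂ)^n)⁻¹ • x) (((2:ℂ)^n)⁻¹ • z) (((2:ℂ)^n)⁻¹ • a)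
               * f (((2:ℂ)^n)⁻¹ • y) (((2:ℂ)^n)⁻¹ • w) (((2:ℂ)^n)⁻¹ • b)) := by
        simp only [hψ, hpw, mul_inv]
        rw [smul_mul_smul_comm]
        module
      rw [heq, norm_smul]
      have hnn : ‖(2:ℂ)^n*(2:ℂ)^n*(2:ℂ)^n*((2:ℂ)^n*(2:ℂ)^n*(2:ℂ)^n)‖
          = (2:ℝ)^n*(2:ℝ)^n*(2:ℝ)^n*((2:ℝ)^n*(2:ℝ)^n*(2:ℝ)^n) := by simp [norm_mul]
      rw [hnn]
      have hexp := stab_exp r n 6 3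
      push_cast at hexp
      calc (2:ℝ)^n*(2:ℝ)^n*(2:ℝ)^n*((2:ℝ)^n*(2:ℝ)^n*(2:ℝ)^n) * ‖_ - _‖
          ≤ (2:ℝ)^n*(2:ℝ)^n*(2:ℝ)^n*((2:ℝ)^n*(2:ℝ)^n*(2:ℝ)^n) *
            (θ * ((((2:ℝ)^n)⁻¹)^r * ‖x‖^r + (((2:ℝ)^n)⁻¹)^r * ‖y‖^r)
              * ((((2:ℝ)^n)⁻¹)^r * ‖z‖^r + (((2:ℝ)^n)⁻¹)^r * ‖w‖^r)
              * ((((2:ℝ)^n)⁻¹)^r * ‖a‖^r + (((2:ℝ)^n)⁻¹)^r * ‖b‖^r)) :=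
            mul_le_mul_of_nonneg_left hm' (by positivity)
        _ = (θ * (‖x‖^r + ‖y‖^r) * (‖z‖^r + ‖w‖^r) * (‖a‖^r + ‖b‖^r))
            * (((2:ℝ)^n)^6 * ((((2:ℝ)^n)⁻¹)^r)^3) := by ring
        _ = _ := by rw [hexp]
    have h4 : Tendsto (fun n => ψ (2*n) (x*y) (z*w) (a*b) - ψ n x z a * ψ n y w b) atTop
        (𝓝 (H (x*y) (z*w) (a*b) - H x z a * H y w b)) := h1.sub h2
    have h5 : Tendsto (fun n => ψ (2*n) (x*y) (z*w) (a*b) - ψ n x z a * ψ n y w b) atTop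
        (𝓝 0) := squeeze_zero_norm h3 (stab_geom_lim _ (by linarith) _)
    exact sub_eq_zero.mp (tendsto_nhds_unique h4 h5)
  -- permutation invariance
  have hperm : ∀ (σ : Equiv.Perm (Fin 3)) (x : Fin 3 → A),
      H (x (σ 0)) (x (σ 1)) (x (σ 2)) = H (x 0) (x 1) (x 2) := by
    intro σ x
    have h1 : Tendsto (fun n => ψ n (x (σ 0)) (x (σ 1)) (x (σ 2))) atTop
        (𝓝 (H (x (σ 0)) (x (σ 1)) (x (σ 2)))) := hpsi _ _ _
    have h2 : Tendsto (fun n => ψ n (x 0) (x 1) (x 2)) atTop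
        (𝓝 (H (x 0) (x 1) (x 2))) := hpsi _ _ _
    have h3 : ∀ n : ℕ, ‖ψ n (x (σ 0)) (x (σ 1)) (x (σ 2)) - ψ n (x 0) (x 1) (x 2)‖
        ≤ (θ * ‖x 0‖^r * ‖x 1‖^r * ‖x 2‖^r) * ((2:ℝ)^((3:ℝ) - r*3))^n := by
      intro n
      have hp' := hp σ (fun i => ((2:ℂ)^n)⁻¹ • x i)
      rw [stab_norm_smul_rpow r n (x 0), stab_norm_smul_rpow r n (x 1),
        stab_norm_smul_rpow r n (x 2)] at hp'
      have heq : ψ n (x (σ 0)) (x (σ 1)) (x (σ 2)) - ψ n (x 0) (x 1) (x 2)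
          = ((2:ℂ)^n*(2:ℂ)^n*(2:ℂ)^n) •
            (f (((2:ℂ)^n)⁻¹ • x (σ 0)) (((2:ℂ)^n)⁻¹ • x (σ 1)) (((2:ℂ)^n)⁻¹ • x (σ 2))
              - f (((2:ℂ)^n)⁻¹ • x 0) (((2:ℂ)^n)⁻¹ • x 1) (((2:ℂ)^n)⁻¹ • x 2)) := by
        simp only [hψ]
        module
      rw [heq, norm_smul]
      have hnn : ‖(2:ℂ)^n*(2:ℂ)^n*(2:ℂ)^n‖ = (2:ℝ)^n*(2:ℝ)^n*(2:ℝ)^n := by simp [norm_mul]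
      rw [hnn]
      have hexp := stab_exp r n 3 3
      push_cast at hexp
      calc (2:ℝ)^n*(2:ℝ)^n*(2:ℝ)^n * ‖_ - _‖
          ≤ (2:ℝ)^n*(2:ℝ)^n*(2:ℝ)^n *
            (θ * ((((2:ℝ)^n)⁻¹)^r * ‖x 0‖^r) * ((((2:ℝ)^n)⁻¹)^r * ‖x 1‖^r)
              * ((((2:ℝ)^n)⁻¹)^r * ‖x 2‖^r)) :=
            mul_le_mul_of_nonneg_left hp' (by positivity)
        _ = (θ * ‖x 0‖^r * ‖x 1‖^r * ‖x 2‖^r) * (((2:ℝ)^n)^3 * ((((2:ℝ)^n)⁻¹)^r)^3) := by ring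
        _ = _ := by rw [hexp]
    have h4 : Tendsto (fun n => ψ n (x (σ 0)) (x (σ 1)) (x (σ 2)) - ψ n (x 0) (x 1) (x 2))
        atTop (𝓝 (H (x (σ 0)) (x (σ 1)) (x (σ 2)) - H (x 0) (x 1) (x 2))) := h1.sub h2
    have h5 : Tendsto (fun n => ψ n (x (σ 0)) (x (σ 1)) (x (σ 2)) - ψ n (x 0) (x 1) (x 2))
        atTop (𝓝 0) := squeeze_zero_norm h3 (stab_geom_lim _ (by linarith) _)
    exact sub_eq_zero.mp (tendsto_nhds_unique h4 h5)
  exact ⟨hH, hmul, hperm⟩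

end StabHelpers

variable {A B : Type*} [NormedRing A] [NormedAlgebra ℂ A] [CompleteSpace A]
  [NormedRing B] [NormedAlgebra ℂ B] [CompleteSpace B]

theorem stmt_17 (s : ℂ) (hs0 : s ≠ 0) (hs1 : ‖s‖ < 1) (r θ : ℝ) (hr : 2 < r) (hθ : 0 ≤ θ)
    (f : A → A → A → B)
    (hzero : ∀ x z a : A, f x 0 a = 0 ∧ f 0 z a = 0 ∧ f x z 0 = 0)
    (hineq : ∀ l m e : ℂ, ‖l‖ = 1 → ‖m‖ = 1 → ‖e‖ = 1 → ∀ x y z w a b : A,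
      ‖(2 : ℂ) • f ((2 : ℂ)⁻¹ • (l • (x + y))) (m • (z - w)) (e • (a + b))
          + (2 : ℂ) • f ((2 : ℂ)⁻¹ • (l • (x - y))) (m • (z + w)) (e • (a - b))
          - (l * m * e) • ((2 : ℂ) • f x z a - (2 : ℂ) • f x w b
              + (2 : ℂ) • f y z b - (2 : ℂ) • f y w a)‖
        ≤ ‖s • D₁ f x y z w a b‖ + θ * (‖x‖ ^ r + ‖y‖ ^ r) * (‖z‖ ^ r + ‖w‖ ^ r) * (‖a‖ ^ r + ‖b‖ ^ r)) :
    (∃! H : A → A → A → B, CTrilinear H ∧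
      ∀ x z a : A, ‖f x z a - H x z a‖ ≤ (2 : ℝ) ^ r * θ / (2 * ((2 : ℝ) ^ r - 2)) * (‖x‖ ^ r * ‖z‖ ^ r * ‖a‖ ^ r)) ∧
    ((∀ (σ : Equiv.Perm (Fin 3)) (x : Fin 3 → A),
      ‖f (x (σ 0)) (x (σ 1)) (x (σ 2)) - f (x 0) (x 1) (x 2)‖
        ≤ θ * ‖x 0‖ ^ r * ‖x 1‖ ^ r * ‖x 2‖ ^ r) →
     (∀ x y z w a b : A,
      ‖f (x * y) (z * w) (a * b) - f x z a * f y w b‖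
        ≤ θ * (‖x‖ ^ r + ‖y‖ ^ r) * (‖z‖ ^ r + ‖w‖ ^ r) * (‖a‖ ^ r + ‖b‖ ^ r)) →
     ∀ H : A → A → A → B,
       (CTrilinear H ∧ ∀ x z a : A, ‖f x z a - H x z a‖ ≤ (2 : ℝ) ^ r * θ / (2 * ((2 : ℝ) ^ r - 2)) * (‖x‖ ^ r * ‖z‖ ^ r * ‖a‖ ^ r)) →
       PermutingTrihomomorphism H) := by
  classical
  have hrpos : (0:ℝ) < r := by linarith
  have hzr : (0:ℝ)^r = 0 := Real.zero_rpow hrpos.ne'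
  have h01 : ∀ x a : A, f x 0 a = 0 := fun x a => (hzero x 0 a).1
  have h02 : ∀ z a : A, f 0 z a = 0 := fun z a => (hzero 0 z a).2.1
  have h03 : ∀ x z : A, f x z 0 = 0 := fun x z => (hzero x z 0).2.2
  have h2r : (2:ℝ) < (2:ℝ)^r := by
    nth_rewrite 1 [← Real.rpow_one 2]
    exact Real.rpow_lt_rpow_of_exponent_lt one_lt_two (by linarith)
  have hCnn : 0 ≤ (2:ℝ)^r * θ / (2 * ((2:ℝ)^r - 2)) := by
    apply div_nonneg
    · positivity
    · nlinarith
  -- Step 1: basic contraction estimate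
  have key1 : ∀ x z a : A,
      ‖(2:ℂ) • f ((2:ℂ)⁻¹ • x) z a - f x z a‖ ≤ θ/2 * (‖x‖^r * ‖z‖^r * ‖a‖^r) := by
    intro x z a
    have h := hineq 1 1 1 (by simp) (by simp) (by simp) x 0 z 0 a 0
    have hD : D₁ f x 0 z 0 a 0 = 0 := by
      simp only [D₁, add_zero, sub_zero, h01, h02, h03, smul_zero]
      module
    have hEq : (2 : ℂ) • f ((2 : ℂ)⁻¹ • ((1:ℂ) • (x + 0))) ((1:ℂ) • (z - 0)) ((1:ℂ) • (a + 0))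
          + (2 : ℂ) • f ((2 : ℂ)⁻¹ • ((1:ℂ) • (x - 0))) ((1:ℂ) • (z + 0)) ((1:ℂ) • (a - 0))
          - ((1:ℂ) * 1 * 1) • ((2 : ℂ) • f x z a - (2 : ℂ) • f x 0 0
              + (2 : ℂ) • f 0 z 0 - (2 : ℂ) • f 0 0 a)
        = (2:ℂ) • ((2:ℂ) • f ((2:ℂ)⁻¹ • x) z a - f x z a) := by
      simp only [one_smul, add_zero, sub_zero, h01, h02, h03, smul_zero]
      module
    rw [hEq, hD, smul_zero, norm_zero, zero_add, norm_smul] at h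
    have h2 : ‖(2:ℂ)‖ = 2 := by simp
    rw [h2] at h
    simp only [norm_zero, hzr, add_zero] at h
    linarith
  -- Step 2: successive differences of the rescaled sequence
  have keyn : ∀ (n : ℕ) (x z a : A),
      ‖stabPhi f (n+1) x z a - stabPhi f n x z a‖
        ≤ (θ/2 * (‖x‖^r * ‖z‖^r * ‖a‖^r)) * ((2:ℝ)^((1:ℝ) - r*1))^n := by
    intro n x z a
    have h1 : stabPhi f (n+1) x z a - stabPhi f n x z a
        = (2:ℂ)^n • ((2:ℂ) • f ((2:ℂ)⁻¹ • (((2:ℂ)^n)⁻¹ • x)) z a - f (((2:ℂ)^n)⁻¹ • x) z a) := by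
      simp only [stabPhi]
      have harg : (2:ℂ)⁻¹ • (((2:ℂ)^n)⁻¹ • x) = ((2:ℂ)^(n+1))⁻¹ • x := by
        rw [smul_smul, ← mul_inv, mul_comm, ← pow_succ]
      rw [harg, pow_succ]
      module
    rw [h1, norm_smul]
    have h2 := key1 (((2:ℂ)^n)⁻¹ • x) z a
    rw [stab_norm_smul_rpow r n x] at h2
    have hnn : ‖(2:ℂ)^n‖ = (2:ℝ)^n := by simp
    rw [hnn]
    have hexp : (2:ℝ)^n * (((2:ℝ)^n)⁻¹)^r = ((2:ℝ)^((1:ℝ) - r*1))^n := by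
      have := stab_exp r n 1 1
      push_cast at this
      simpa using this
    calc (2:ℝ)^n * ‖(2:ℂ) • f ((2:ℂ)⁻¹ • (((2:ℂ)^n)⁻¹ • x)) z a - f (((2:ℂ)^n)⁻¹ • x) z a‖
        ≤ (2:ℝ)^n * (θ/2 * ((((2:ℝ)^n)⁻¹)^r * ‖x‖^r * ‖z‖^r * ‖a‖^r)) := by
          apply mul_le_mul_of_nonneg_left _ (by positivity)
          calc ‖(2:ℂ) • f ((2:ℂ)⁻¹ • (((2:ℂ)^n)⁻¹ • x)) z a - f (((2:ℂ)^n)⁻¹ • x) z a‖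
              ≤ θ/2 * ((((2:ℝ)^n)⁻¹)^r * ‖x‖^r * ‖z‖^r * ‖a‖^r) := h2
            _ = _ := by ring
      _ = (θ/2 * (‖x‖^r * ‖z‖^r * ‖a‖^r)) * ((2:ℝ)^n * (((2:ℝ)^n)⁻¹)^r) := by ring
      _ = _ := by rw [hexp]
  have hrho : (2:ℝ)^((1:ℝ) - r*1) < 1 :=
    Real.rpow_lt_one_of_one_lt_of_neg one_lt_two (by linarith)
  -- Step 3: the limit map H
  have hcauchy : ∀ x z a : A, CauchySeq (fun n => stabPhi f n x z a) := by
    intro x z a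
    apply cauchySeq_of_le_geometric ((2:ℝ)^((1:ℝ) - r*1)) (θ/2 * (‖x‖^r * ‖z‖^r * ‖a‖^r)) hrho
    intro n
    rw [dist_eq_norm, norm_sub_rev]
    exact keyn n x z a
  have hex : ∀ x z a : A, ∃ L : B, Tendsto (fun n => stabPhi f n x z a) atTop (𝓝 L) :=
    fun x z a => cauchySeq_tendsto_of_complete (hcauchy x z a)
  choose H hφ using hex
  -- Step 4: the approximation bound
  have hbound : ∀ x z a : A, ‖f x z a - H x z a‖
      ≤ (2:ℝ)^r * θ / (2 * ((2:ℝ)^r - 2)) * (‖x‖^r * ‖z‖^r * ‖a‖^r) := by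
    intro x z a
    have hd := dist_le_of_le_geometric_of_tendsto₀ ((2:ℝ)^((1:ℝ) - r*1))
      (θ/2 * (‖x‖^r * ‖z‖^r * ‖a‖^r))
      hrho (fun n => by rw [dist_eq_norm, norm_sub_rev]; exact keyn n x z a) (hφ x z a)
    have hphi0 : stabPhi f 0 x z a = f x z a := by simp [stabPhi]
    rw [hphi0, dist_eq_norm] at hd
    have hsub : (2:ℝ)^((1:ℝ) - r*1) = 2 / (2:ℝ)^r := by
      rw [mul_one, Real.rpow_sub two_pos, Real.rpow_one]
    rw [hsub] at hd
    have hne1 : (2:ℝ)^r ≠ 0 := by positivity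
    have hne2 : (2:ℝ)^r - 2 ≠ 0 := by nlinarith
    have heqc : θ/2 * (‖x‖^r * ‖z‖^r * ‖a‖^r) / (1 - 2/(2:ℝ)^r)
        = (2:ℝ)^r * θ / (2 * ((2:ℝ)^r - 2)) * (‖x‖^r * ‖z‖^r * ‖a‖^r) := by
      rw [show (1:ℝ) - 2/(2:ℝ)^r = ((2:ℝ)^r - 2)/(2:ℝ)^r by field_simp]
      field_simp
    rw [heqc] at hd
    exact hd
  -- Step 5: vanishing of H on degenerate arguments
  have hH01 : ∀ x a : A, H x 0 a = 0 := by
    intro x a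
    have h1 : (fun n => stabPhi f n x 0 a) = fun _ => (0:B) := by
      funext n; simp [stabPhi, h01]
    exact tendsto_nhds_unique (hφ x 0 a) (by rw [h1]; exact tendsto_const_nhds)
  have hH02 : ∀ z a : A, H 0 z a = 0 := by
    intro z a
    have h1 : (fun n => stabPhi f n 0 z a) = fun _ => (0:B) := by
      funext n; simp [stabPhi, h02]
    exact tendsto_nhds_unique (hφ 0 z a) (by rw [h1]; exact tendsto_const_nhds)
  have hH03 : ∀ x z : A, H x z 0 = 0 := by
    intro x z
    have h1 : (fun n => stabPhi f n x z 0) = fun _ => (0:B) := by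
      funext n; simp [stabPhi, h03]
    exact tendsto_nhds_unique (hφ x z 0) (by rw [h1]; exact tendsto_const_nhds)
  -- Step 6: halving identity
  have hhalf : ∀ x z a : A, H ((2:ℂ)⁻¹ • x) z a = (2:ℂ)⁻¹ • H x z a := by
    intro x z a
    have h1 : ∀ n : ℕ, stabPhi f n ((2:ℂ)⁻¹ • x) z a = (2:ℂ)⁻¹ • stabPhi f (n+1) x z a := by
      intro n
      simp only [stabPhi]
      have harg : ((2:ℂ)^n)⁻¹ • ((2:ℂ)⁻¹ • x) = ((2:ℂ)^(n+1))⁻¹ • x := by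
        rw [smul_smul, ← mul_inv, ← pow_succ]
      rw [harg, pow_succ]
      module
    have h3 : Tendsto (fun n : ℕ => stabPhi f (n+1) x z a) atTop (𝓝 (H x z a)) := by
      have := (hφ x z a).comp (tendsto_add_atTop_nat 1)
      exact this
    refine tendsto_nhds_unique (hφ _ z a) ?_
    simp only [h1]
    exact h3.const_smul _
  -- Step 7: the limiting functional inequality
  have hineqV : ∀ l m e : ℂ, ‖l‖ = 1 → ‖m‖ = 1 → ‖e‖ = 1 → ∀ x y z w a b : A,
      ‖stabVec f l m e x y z w a b‖
        ≤ ‖s • D₁ f x y z w a b‖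
          + θ * (‖x‖^r + ‖y‖^r) * (‖z‖^r + ‖w‖^r) * (‖a‖^r + ‖b‖^r) :=
    fun l m e hl hm' he x y z w a b => hineq l m e hl hm' he x y z w a b
  have hEH : ∀ l m e : ℂ, ‖l‖ = 1 → ‖m‖ = 1 → ‖e‖ = 1 → ∀ x y z w a b : A,
      ‖stabVec H l m e x y z w a b‖ ≤ ‖s‖ * ‖D₁ H x y z w a b‖ := by
    intro l m e hl hm' he x y z w a b
    have hVlim : Tendsto (fun n => stabVec (stabPhi f n) l m e x y z w a b) atTop
        (𝓝 (stabVec H l m e x y z w a b)) := by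
      simp only [stabVec]
      exact (((hφ _ _ _).const_smul (2:ℂ)).add ((hφ _ _ _).const_smul (2:ℂ))).sub
        ((((((hφ _ _ _).const_smul (2:ℂ)).sub ((hφ _ _ _).const_smul (2:ℂ))).add
          ((hφ _ _ _).const_smul (2:ℂ))).sub ((hφ _ _ _).const_smul (2:ℂ))).const_smul (l*m*e))
    have hWlim : Tendsto (fun n => D₁ (stabPhi f n) x y z w a b) atTop
        (𝓝 (D₁ H x y z w a b)) := by
      simp only [D₁]
      exact (((((hφ _ _ _).add (hφ _ _ _)).sub ((hφ _ _ _).const_smul (2:ℂ))).add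
        ((hφ _ _ _).const_smul (2:ℂ))).sub ((hφ _ _ _).const_smul (2:ℂ))).add
        ((hφ _ _ _).const_smul (2:ℂ))
    have hbnd : ∀ n : ℕ, ‖stabVec (stabPhi f n) l m e x y z w a b‖
        ≤ ‖s‖ * ‖D₁ (stabPhi f n) x y z w a b‖
          + (θ * (‖x‖^r + ‖y‖^r) * (‖z‖^r + ‖w‖^r) * (‖a‖^r + ‖b‖^r))
            * ((2:ℝ)^((1:ℝ) - r*1))^n := by
      intro n
      have hc := hineqV l m e hl hm' he (((2:ℂ)^n)⁻¹ • x) (((2:ℂ)^n)⁻¹ • y) z w a b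
      rw [norm_smul] at hc
      rw [stab_norm_smul_rpow r n x, stab_norm_smul_rpow r n y] at hc
      rw [← stab_vec_scale f n l m e x y z w a b, ← stab_D1_scale f n x y z w a b,
        norm_smul, norm_smul]
      have hnn : ‖(2:ℂ)^n‖ = (2:ℝ)^n := by simp
      rw [hnn]
      have hexp : (2:ℝ)^n * (((2:ℝ)^n)⁻¹)^r = ((2:ℝ)^((1:ℝ) - r*1))^n := by
        have := stab_exp r n 1 1
        push_cast at this
        simpa using this
      calc (2:ℝ)^n * ‖stabVec f l m e (((2:ℂ)^n)⁻¹ • x) (((2:ℂ)^n)⁻¹ • y) z w a b‖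
          ≤ (2:ℝ)^n * (‖s‖ * ‖D₁ f (((2:ℂ)^n)⁻¹ • x) (((2:ℂ)^n)⁻¹ • y) z w a b‖
              + θ * ((((2:ℝ)^n)⁻¹)^r * ‖x‖^r + (((2:ℝ)^n)⁻¹)^r * ‖y‖^r)
                * (‖z‖^r + ‖w‖^r) * (‖a‖^r + ‖b‖^r)) :=
            mul_le_mul_of_nonneg_left hc (by positivity)
        _ = ‖s‖ * ((2:ℝ)^n * ‖D₁ f (((2:ℂ)^n)⁻¹ • x) (((2:ℂ)^n)⁻¹ • y) z w a b‖)
            + (θ * (‖x‖^r + ‖y‖^r) * (‖z‖^r + ‖w‖^r) * (‖a‖^r + ‖b‖^r))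
              * ((2:ℝ)^n * (((2:ℝ)^n)⁻¹)^r) := by ring
        _ = _ := by rw [hexp]
    have hRlim : Tendsto (fun n => ‖s‖ * ‖D₁ (stabPhi f n) x y z w a b‖
        + (θ * (‖x‖^r + ‖y‖^r) * (‖z‖^r + ‖w‖^r) * (‖a‖^r + ‖b‖^r))
          * ((2:ℝ)^((1:ℝ) - r*1))^n) atTop (𝓝 (‖s‖ * ‖D₁ H x y z w a b‖ + 0)) :=
      (hWlim.norm.const_mul ‖s‖).add (stab_geom_lim ((1:ℝ) - r*1) (by linarith) _)
    have := le_of_tendsto_of_tendsto' hVlim.norm hRlim hbnd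
    simpa using this
  -- Step 8: H satisfies the exact functional equation
  have hD10 : ∀ x y z w a b : A, D₁ H x y z w a b = 0 := by
    intro x y z w a b
    have h := hEH 1 1 1 (by simp) (by simp) (by simp) x y z w a b
    have hveq : stabVec H 1 1 1 x y z w a b = D₁ H x y z w a b := by
      simp only [stabVec, D₁, one_smul, one_mul]
      rw [hhalf, hhalf]
      module
    rw [hveq] at h
    have h0 : ‖D₁ H x y z w a b‖ ≤ 0 := by nlinarith [norm_nonneg (D₁ H x y z w a b)]
    exact norm_le_zero_iff.mp h0
  have hVec0 : ∀ l m e : ℂ, ‖l‖ = 1 → ‖m‖ = 1 → ‖e‖ = 1 → ∀ x y z w a b : A,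
      stabVec H l m e x y z w a b = 0 := by
    intro l m e hl hm' he x y z w a b
    have h := hEH l m e hl hm' he x y z w a b
    rw [hD10, norm_zero, mul_zero] at h
    exact norm_le_zero_iff.mp h
  -- Step 9: T¹-homogeneity
  have hFE : ∀ l m e : ℂ, ‖l‖ = 1 → ‖m‖ = 1 → ‖e‖ = 1 → ∀ x z a : A,
      H (l • x) (m • z) (e • a) = (l * m * e) • H x z a := by
    intro l m e hl hm' he x z a
    have h := hVec0 l m e hl hm' he x 0 z 0 a 0
    have h2 : (2:ℂ) • H (l • x) (m • z) (e • a) - (2:ℂ) • ((l*m*e) • H x z a)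
        = stabVec H l m e x 0 z 0 a 0 := by
      simp only [stabVec, add_zero, sub_zero]
      rw [hhalf]
      rw [hH01 x 0, hH02 z 0, hH02 0 a]
      module
    rw [h] at h2
    have h3 := sub_eq_zero.mp h2
    have h2ne : (2:ℂ) ≠ 0 := two_ne_zero
    have := congrArg (fun t => (2:ℂ)⁻¹ • t) h3
    simpa [smul_smul, inv_mul_cancel₀ h2ne] using this
  -- Step 10: additivity in each variable
  have hAdd1 : ∀ u v z a : A, H (u + v) z a = H u z a + H v z a := by
    intro u v z a
    refine stab_jensen (fun p => H p z a) (hH02 z a) ?_ u v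
    intro p q
    have h := hD10 p q z 0 a 0
    have h2 : H (p+q) z a + H (p-q) z a - (2:ℂ) • H p z a = D₁ H p q z 0 a 0 := by
      simp only [D₁, add_zero, sub_zero]
      rw [hH01 p 0, hH03 q z, hH01 q a]
      module
    rw [h] at h2
    exact sub_eq_zero.mp h2
  have hAdd2 : ∀ x u v a : A, H x (u + v) a = H x u a + H x v a := by
    intro x u v a
    refine stab_jensen (fun p => H x p a) (hH01 x a) ?_ u v
    intro p q
    have h := hD10 x 0 p q a 0
    have h2 : H x (p+q) a + H x (p-q) a - (2:ℂ) • H x p a = D₁ H x 0 p q a 0 := by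
      simp only [D₁, add_zero, sub_zero]
      rw [hH03 x q, hH02 p 0, hH02 q a]
      module
    rw [h] at h2
    exact sub_eq_zero.mp h2
  have hAdd3 : ∀ x z u v : A, H x z (u + v) = H x z u + H x z v := by
    intro x z u v
    refine stab_jensen (fun p => H x z p) (hH03 x z) ?_ u v
    intro p q
    have h := hD10 x 0 z 0 p q
    have h2 : H x z (p+q) + H x z (p-q) - (2:ℂ) • H x z p = D₁ H x 0 z 0 p q := by
      simp only [D₁, add_zero, sub_zero]
      rw [hH01 x q, hH02 z q, hH02 0 p]
      module
    rw [h] at h2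
    exact sub_eq_zero.mp h2
  -- Step 11: full ℂ-homogeneity
  have hhom1 : ∀ (c : ℂ) (x z a : A), H (c • x) z a = c • H x z a := by
    intro c x z a
    exact stab_chomog (fun p => H p z a) (fun u v => hAdd1 u v z a)
      (fun l hl p => by simpa using hFE l 1 1 hl (by simp) (by simp) p z a) c x
  have hhom2 : ∀ (c : ℂ) (x z a : A), H x (c • z) a = c • H x z a := by
    intro c x z a
    exact stab_chomog (fun p => H x p a) (fun u v => hAdd2 x u v a)
      (fun l hl p => by simpa using hFE 1 l 1 (by simp) hl (by simp) x p a) c z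
  have hhom3 : ∀ (c : ℂ) (x z a : A), H x z (c • a) = c • H x z a := by
    intro c x z a
    exact stab_chomog (fun p => H x z p) (fun u v => hAdd3 x z u v)
      (fun l hl p => by simpa using hFE 1 1 l (by simp) (by simp) hl x z p) c a
  have hHtri : CTrilinear H := ⟨⟨hAdd1, hAdd2, hAdd3⟩, hhom1, hhom2, hhom3⟩
  constructor
  · refine ⟨H, ⟨hHtri, hbound⟩, ?_⟩
    intro H' hH'
    have hb2 : ∀ x z a : A, ‖H' x z a - H x z a‖
        ≤ (2 * ((2:ℝ)^r * θ / (2 * ((2:ℝ)^r - 2)))) * (‖x‖^r * ‖z‖^r * ‖a‖^r) := by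
      intro x z a
      have t1 := hH'.2 x z a
      have t2 := hbound x z a
      have t3 : ‖H' x z a - H x z a‖ ≤ ‖f x z a - H' x z a‖ + ‖f x z a - H x z a‖ := by
        have heq : H' x z a - H x z a = -(f x z a - H' x z a) + (f x z a - H x z a) := by abel
        rw [heq]
        exact (norm_add_le _ _).trans (by rw [norm_neg])
      calc ‖H' x z a - H x z a‖
          ≤ ‖f x z a - H' x z a‖ + ‖f x z a - H x z a‖ := t3
        _ ≤ (2:ℝ)^r * θ / (2 * ((2:ℝ)^r - 2)) * (‖x‖^r * ‖z‖^r * ‖a‖^r)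
            + (2:ℝ)^r * θ / (2 * ((2:ℝ)^r - 2)) * (‖x‖^r * ‖z‖^r * ‖a‖^r) := by
            exact add_le_add t1 t2
        _ = (2 * ((2:ℝ)^r * θ / (2 * ((2:ℝ)^r - 2)))) * (‖x‖^r * ‖z‖^r * ‖a‖^r) := by ring
    exact stab_tri_eq r _ (by linarith) H' H hH'.1 hHtri hb2
  · intro hperm hmult H' hH'
    exact stab_part2 r θ _ hr hθ hCnn f H' hH'.1 hH'.2 hperm hmult
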